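/- arXiv:2112.11595 — 2 statements merged into one kernel-verified Lean document; each statement's English description precedes it below -/
import Mathlib

section
/- Let T_k satisfy T_k = 1 + z·T_k^k (generating function of k-ary trees) and let f = z·T_k(z^{2k-1}). Then f - z = (z·f)^k, so the B-function of f is B_f(z) = z^{k-1}. -/
open PowerSeries

/-- Composition `f ∘ g` of formal power series (meaningful when the constant
coefficient of `g` is zero). -/
noncomputable def comp (f g : PowerSeries ℚ) : PowerSeries ℚ :=
  PowerSeries.mk fun n =>
    ∑ i ∈ Finset.range (n + 1), (PowerSeries.coeff (R := ℚ) i f) * (PowerSeries.coeff (R := ℚ) n (g ^ i))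

/-- A formal power series `f` is pseudo-involutory when its compositional
inverse is `-f(-z)`. -/
def PseudoInvolutory (f : PowerSeries ℚ) : Prop :=
  comp f (-(comp f (-X))) = X ∧ comp (-(comp f (-X))) f = X

lemma coeff_comp (f g : PowerSeries ℚ) (n : ℕ) :
    coeff n (comp f g) =
      ∑ i ∈ Finset.range (n + 1), coeff i f * coeff n (g ^ i) := by
  simp [comp]

lemma coeff_pow_zero {g : PowerSeries ℚ} (hg : constantCoeff g = 0)
    {i m : ℕ} (h : m < i) : coeff m (g ^ i) = 0 := by
  have hd : (X : PowerSeries ℚ) ^ i ∣ g ^ i := pow_dvd_pow_of_dvd (X_dvd_iff.mpr hg) i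
  exact (X_pow_dvd_iff.mp hd) m h

lemma coeff_aeval {g : PowerSeries ℚ} (hg : constantCoeff g = 0)
    (p : Polynomial ℚ) (m : ℕ) :
    coeff m (Polynomial.aeval g p) =
      ∑ i ∈ Finset.range (m + 1), p.coeff i * coeff m (g ^ i) := by
  have hN : p.natDegree < max (p.natDegree + 1) (m + 1) :=
    lt_of_lt_of_le (Nat.lt_succ_self _) (le_max_left _ _)
  rw [Polynomial.aeval_eq_sum_range' hN, map_sum]
  simp only [map_smul, smul_eq_mul]
  refine (Finset.sum_subset (Finset.range_subset_range.mpr (le_max_right _ _)) ?_).symm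
  intro i _ hi2
  rw [coeff_pow_zero hg (by simpa using hi2), mul_zero]

lemma coeff_comp_eq_aeval {g : PowerSeries ℚ} (hg : constantCoeff g = 0)
    (f : PowerSeries ℚ) {m n : ℕ} (hmn : m ≤ n) :
    coeff m (comp f g) = coeff m (Polynomial.aeval g (trunc (n + 1) f)) := by
  rw [coeff_aeval hg, coeff_comp]
  refine Finset.sum_congr rfl fun i hi => ?_
  rw [coeff_trunc, if_pos (by simp at hi; omega)]

lemma comp_mul {g : PowerSeries ℚ} (hg : constantCoeff g = 0)
    (a b : PowerSeries ℚ) : comp (a * b) g = comp a g * comp b g := by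
  ext n
  rw [coeff_comp_eq_aeval hg (a * b) (le_refl n), PowerSeries.coeff_mul]
  have h1 : ∀ p ∈ Finset.HasAntidiagonal.antidiagonal n,
      coeff p.1 (comp a g) * coeff p.2 (comp b g) =
      coeff p.1 (Polynomial.aeval g (trunc (n+1) a)) *
        coeff p.2 (Polynomial.aeval g (trunc (n+1) b)) := by
    intro p hp
    have := Finset.HasAntidiagonal.antidiagonal.fst_le hp
    have := Finset.HasAntidiagonal.antidiagonal.snd_le hp
    rw [coeff_comp_eq_aeval hg a ‹p.1 ≤ n›, coeff_comp_eq_aeval hg b ‹p.2 ≤ n›]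
  rw [Finset.sum_congr rfl h1, ← PowerSeries.coeff_mul, ← map_mul]
  rw [coeff_aeval hg, coeff_aeval hg]
  refine Finset.sum_congr rfl fun i hi => ?_
  congr 1
  rw [coeff_trunc, if_pos (by simp at hi; omega), PowerSeries.coeff_mul, Polynomial.coeff_mul]
  refine Finset.sum_congr rfl fun p hp => ?_
  have h1 := Finset.HasAntidiagonal.antidiagonal.fst_le hp
  have h2 := Finset.HasAntidiagonal.antidiagonal.snd_le hp
  simp at hi
  rw [coeff_trunc, if_pos (by omega), coeff_trunc, if_pos (by omega)]

lemma comp_one (g : PowerSeries ℚ) : comp 1 g = 1 := by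
  ext n
  rw [coeff_comp]
  simp [PowerSeries.coeff_one]

lemma comp_add (a b g : PowerSeries ℚ) : comp (a + b) g = comp a g + comp b g := by
  ext n
  simp [coeff_comp, add_mul, Finset.sum_add_distrib]

lemma comp_X {g : PowerSeries ℚ} (hg : constantCoeff g = 0) : comp X g = g := by
  ext n
  rw [coeff_comp]
  rcases Nat.eq_zero_or_pos n with h | h
  · subst h; simpa using hg.symm
  · rw [Finset.sum_eq_single 1] <;> simp +contextual [PowerSeries.coeff_X]
    omega

lemma comp_pow {g : PowerSeries ℚ} (hg : constantCoeff g = 0)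
    (a : PowerSeries ℚ) (m : ℕ) : comp (a ^ m) g = comp a g ^ m := by
  induction m with
  | zero => simpa using comp_one g
  | succ m ih => rw [pow_succ, comp_mul hg, ih, pow_succ]

/-- For the `k`-ary tree generating function `T_k = 1 + z·T_k^k` and the
aerated series `f = z·T_k(z^{2k-1})`, we have `f - z = (z·f)^k`; hence the
`B`-function of `f` is `B_f(z) = z^{k-1}`. -/
theorem kary_tree_aerated_B (k : ℕ) (hk : 1 ≤ k) (T : PowerSeries ℚ)
    (hT : T = 1 + X * T ^ k) :
    (X * comp T (X ^ (2 * k - 1))) - X = (X * (X * comp T (X ^ (2 * k - 1)))) ^ k ∧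
      (X * comp T (X ^ (2 * k - 1))) - X =
        X * (X * comp T (X ^ (2 * k - 1))) *
          comp ((X : PowerSeries ℚ) ^ (k - 1)) (X * (X * comp T (X ^ (2 * k - 1)))) := by
  set g : PowerSeries ℚ := X ^ (2 * k - 1) with hgdef
  have hg : constantCoeff g = 0 := by
    rw [hgdef, map_pow, constantCoeff_X, zero_pow (by omega)]
  set A : PowerSeries ℚ := comp T g with hAdef
  have hA : A = 1 + g * A ^ k := by
    rw [hAdef]
    nth_rewrite 1 [hT]
    rw [comp_add, comp_one, comp_mul hg, comp_X hg, comp_pow hg]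
  have key : X * A - X = (X * (X * A)) ^ k := by
    nth_rewrite 1 [hA]
    have : (X * (X * A)) ^ k = X ^ (2 * k) * A ^ k := by
      rw [← mul_assoc, ← sq, mul_pow, ← pow_mul]
    rw [this, mul_add, mul_one, add_sub_cancel_left, ← mul_assoc, mul_comm (X : PowerSeries ℚ) g,
      hgdef, ← pow_succ]
    congr 2
    omega
  refine ⟨key, ?_⟩
  have hXA : constantCoeff (X * (X * A)) = 0 := by
    rw [map_mul, constantCoeff_X, zero_mul]
  rw [comp_pow hXA, comp_X hXA, ← pow_succ', key]
  congr 1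
  omega
end

section
/- Let S be the formal power series with S(0)=1 satisfying S = e^{z(1+S)}. Then z·S(z) = (z·T) ∘ (z·e^z) where T = e^{zT}, and z·S is pseudo-involutory: its compositional inverse equals -(-z)·S(-z). -/
open PowerSeries

namespace MFAux

open Finset

local notation "cf" => PowerSeries.coeff (R := ℚ)
local notation "cc" => PowerSeries.constantCoeff (R := ℚ)

lemma coeff_comp_def (f g : PowerSeries ℚ) (n : ℕ) :
    cf n (comp f g) = ∑ i ∈ range (n + 1), cf i f * cf n (g ^ i) := by
  simp [comp]

lemma coeff_pow_eq_zero {g : PowerSeries ℚ} (hg : cc g = 0) {i n : ℕ} (h : n < i) :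
    cf n (g ^ i) = 0 := by
  have h1 : (X : PowerSeries ℚ) ∣ g := X_dvd_iff.mpr hg
  have h2 : (X : PowerSeries ℚ) ^ i ∣ g ^ i := pow_dvd_pow_of_dvd h1 i
  exact X_pow_dvd_iff.mp h2 n h

lemma coeff_mul_pow_eq_zero {u v : PowerSeries ℚ} (hu : cc u = 0) (hv : cc v = 0)
    {i j n : ℕ} (h : n < i + j) : cf n (u ^ i * v ^ j) = 0 := by
  have h1 : (X : PowerSeries ℚ) ^ (i + j) ∣ u ^ i * v ^ j := by
    rw [pow_add]
    exact mul_dvd_mul (pow_dvd_pow_of_dvd (X_dvd_iff.mpr hu) i)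
      (pow_dvd_pow_of_dvd (X_dvd_iff.mpr hv) j)
  exact X_pow_dvd_iff.mp h1 n h

lemma coeff_comp_of_le {g : PowerSeries ℚ} (hg : cc g = 0) (f : PowerSeries ℚ)
    {n N : ℕ} (h : n ≤ N) :
    cf n (comp f g) = ∑ i ∈ range (N + 1), cf i f * cf n (g ^ i) := by
  rw [coeff_comp_def]
  refine Finset.sum_subset (Finset.range_subset_range.mpr (by omega)) ?_
  intro i hi hni
  simp only [mem_range] at hi hni
  rw [coeff_pow_eq_zero hg (by omega), mul_zero]

lemma comp_add (f₁ f₂ g : PowerSeries ℚ) :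
    comp (f₁ + f₂) g = comp f₁ g + comp f₂ g := by
  ext n
  simp [coeff_comp_def, add_mul, Finset.sum_add_distrib]

lemma comp_neg (f g : PowerSeries ℚ) : comp (-f) g = -(comp f g) := by
  ext n
  simp [coeff_comp_def, neg_mul, Finset.sum_neg_distrib]

lemma comp_one (g : PowerSeries ℚ) : comp 1 g = 1 := by
  ext n
  rw [coeff_comp_def]
  rw [Finset.sum_eq_single 0]
  · simp
  · intro i hi hne
    simp [PowerSeries.coeff_one, hne]
  · simp

lemma constantCoeff_comp {g : PowerSeries ℚ} (hg : cc g = 0) (f : PowerSeries ℚ) :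
    cc (comp f g) = cc f := by
  have h0 := coeff_comp_def f g 0
  simp only [PowerSeries.coeff_zero_eq_constantCoeff] at h0
  simpa using h0

lemma comp_X_right (f : PowerSeries ℚ) : comp f X = f := by
  ext n
  rw [coeff_comp_def]
  rw [Finset.sum_eq_single n]
  · simp [PowerSeries.coeff_X_pow]
  · intro i hi hne
    simp [PowerSeries.coeff_X_pow, hne.symm]
  · simp

lemma comp_X_left {g : PowerSeries ℚ} (hg : cc g = 0) : comp X g = g := by
  ext n
  rw [coeff_comp_def]
  rcases n with _ | m
  · simpa using hg.symm
  · rw [Finset.sum_eq_single 1]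
    · simp
    · intro i hi hne
      simp [PowerSeries.coeff_X, hne]
    · intro h
      simp only [mem_range] at h
      omega

lemma comp_zero (f : PowerSeries ℚ) : comp f 0 = PowerSeries.C (R := ℚ) (cc f) := by
  ext n
  rw [coeff_comp_def]
  rw [Finset.sum_eq_single 0]
  · rcases n with _ | m <;>
      simp [PowerSeries.coeff_C, PowerSeries.coeff_one]
  · intro i hi hne
    rw [zero_pow hne, map_zero, mul_zero]
  · simp

/-- Helper: a sum over antidiagonals up to `n` equals the full square sum when
terms beyond total degree `n` vanish. -/
lemma sum_antidiag_range (n : ℕ) (G : ℕ → ℕ → ℚ)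
    (h0 : ∀ i j, n < i + j → G i j = 0) :
    ∑ k ∈ range (n + 1), ∑ p ∈ Finset.HasAntidiagonal.antidiagonal k, G p.1 p.2
      = ∑ i ∈ range (n + 1), ∑ j ∈ range (n + 1), G i j := by
  rw [← Finset.sum_product']
  rw [← Finset.sum_biUnion (by
    intro a _ b _ hab
    simp only [Finset.disjoint_left]
    intro p hpa hpb
    simp only [Finset.mem_coe, Finset.HasAntidiagonal.mem_antidiagonal] at hpa hpb
    exact hab (hpa.symm.trans hpb))]
  refine Finset.sum_subset ?_ ?_
  · intro p hp
    simp only [Finset.mem_biUnion, mem_range, Finset.HasAntidiagonal.mem_antidiagonal] at hp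
    obtain ⟨k, hk, hpk⟩ := hp
    simp only [Finset.mem_product, mem_range]
    omega
  · intro p hp hnp
    simp only [Finset.mem_product, mem_range] at hp
    apply h0
    by_contra hle
    push_neg at hle
    exact hnp (Finset.mem_biUnion.mpr ⟨p.1 + p.2, mem_range.mpr (by omega),
      Finset.HasAntidiagonal.mem_antidiagonal.mpr rfl⟩)

lemma coeff_mul_comp₂ {u v : PowerSeries ℚ} (hu : cc u = 0) (hv : cc v = 0)
    (f₁ f₂ : PowerSeries ℚ) (n : ℕ) :
    cf n (comp f₁ u * comp f₂ v)
      = ∑ i ∈ range (n + 1), ∑ j ∈ range (n + 1),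
          cf i f₁ * cf j f₂ * cf n (u ^ i * v ^ j) := by
  rw [PowerSeries.coeff_mul]
  have step1 : ∀ p ∈ Finset.HasAntidiagonal.antidiagonal n,
      cf p.1 (comp f₁ u) * cf p.2 (comp f₂ v)
        = ∑ i ∈ range (n + 1), ∑ j ∈ range (n + 1),
            cf i f₁ * cf j f₂ * (cf p.1 (u ^ i) * cf p.2 (v ^ j)) := by
    intro p hp
    have hp' := Finset.HasAntidiagonal.mem_antidiagonal.mp hp
    rw [coeff_comp_of_le hu f₁ (show p.1 ≤ n by omega),
      coeff_comp_of_le hv f₂ (show p.2 ≤ n by omega), Finset.sum_mul_sum]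
    refine Finset.sum_congr rfl fun i _ => Finset.sum_congr rfl fun j _ => by ring
  rw [Finset.sum_congr rfl step1, Finset.sum_comm]
  refine Finset.sum_congr rfl fun i _ => ?_
  rw [Finset.sum_comm]
  refine Finset.sum_congr rfl fun j _ => ?_
  rw [← Finset.mul_sum, PowerSeries.coeff_mul]

lemma comp_mul {g : PowerSeries ℚ} (hg : cc g = 0) (f₁ f₂ : PowerSeries ℚ) :
    comp (f₁ * f₂) g = comp f₁ g * comp f₂ g := by
  ext n
  rw [coeff_comp_def, coeff_mul_comp₂ hg hg]
  have step1 : ∀ k ∈ range (n + 1),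
      cf k (f₁ * f₂) * cf n (g ^ k)
        = ∑ p ∈ Finset.HasAntidiagonal.antidiagonal k, cf p.1 f₁ * cf p.2 f₂ * cf n (g ^ (p.1 + p.2)) := by
    intro k hk
    rw [PowerSeries.coeff_mul, Finset.sum_mul]
    refine Finset.sum_congr rfl fun p hp => ?_
    rw [← Finset.HasAntidiagonal.mem_antidiagonal.mp hp]
  rw [Finset.sum_congr rfl step1,
    sum_antidiag_range n (fun i j => cf i f₁ * cf j f₂ * cf n (g ^ (i + j)))
      (fun i j h => by
        show cf i f₁ * cf j f₂ * cf n (g ^ (i + j)) = 0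
        rw [coeff_pow_eq_zero hg h, mul_zero])]
  refine Finset.sum_congr rfl fun i _ => Finset.sum_congr rfl fun j _ => ?_
  rw [pow_add]

lemma comp_pow {g : PowerSeries ℚ} (hg : cc g = 0) (f : PowerSeries ℚ) (k : ℕ) :
    comp (f ^ k) g = (comp f g) ^ k := by
  induction k with
  | zero => simpa using comp_one g
  | succ m ih => rw [pow_succ, comp_mul hg, ih, pow_succ]

lemma comp_assoc {g h : PowerSeries ℚ} (hg : cc g = 0) (hh : cc h = 0)
    (f : PowerSeries ℚ) :
    comp (comp f g) h = comp f (comp g h) := by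
  ext n
  rw [coeff_comp_def, coeff_comp_def]
  have step1 : ∀ i ∈ range (n + 1),
      cf i (comp f g) * cf n (h ^ i)
        = ∑ j ∈ range (n + 1), cf j f * (cf i (g ^ j) * cf n (h ^ i)) := by
    intro i hi
    simp only [mem_range] at hi
    rw [coeff_comp_of_le hg f (show i ≤ n by omega), Finset.sum_mul]
    exact Finset.sum_congr rfl fun j _ => by ring
  rw [Finset.sum_congr rfl step1, Finset.sum_comm]
  refine Finset.sum_congr rfl fun j _ => ?_
  rw [← Finset.mul_sum, ← comp_pow hh, coeff_comp_def (g ^ j) h]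

lemma exp_comp_add {a b : PowerSeries ℚ} (ha : cc a = 0) (hb : cc b = 0) :
    comp (PowerSeries.exp ℚ) (a + b)
      = comp (PowerSeries.exp ℚ) a * comp (PowerSeries.exp ℚ) b := by
  ext n
  rw [coeff_comp_def, coeff_mul_comp₂ ha hb]
  have hfac : ∀ m : ℕ, ((m.factorial : ℚ)) ≠ 0 := fun m =>
    Nat.cast_ne_zero.mpr m.factorial_ne_zero
  have step1 : ∀ N ∈ range (n + 1),
      cf N (PowerSeries.exp ℚ) * cf n ((a + b) ^ N)
        = ∑ p ∈ Finset.HasAntidiagonal.antidiagonal N,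
            (1 / (p.1.factorial : ℚ)) * (1 / (p.2.factorial : ℚ))
              * cf n (a ^ p.1 * b ^ p.2) := by
    intro N hN
    rw [Finset.Nat.sum_antidiagonal_eq_sum_range_succ_mk, add_pow, map_sum,
      Finset.mul_sum]
    refine Finset.sum_congr rfl fun k hk => ?_
    simp only [mem_range] at hk
    have hkN : k ≤ N := by omega
    have hchoose : (N.choose k : ℚ) * k.factorial * (N - k).factorial = N.factorial := by
      rw [← Nat.cast_mul, ← Nat.cast_mul, Nat.choose_mul_factorial_mul_factorial hkN]
    have hc : cf n (a ^ k * b ^ (N - k) * (N.choose k : PowerSeries ℚ))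
        = (N.choose k : ℚ) * cf n (a ^ k * b ^ (N - k)) := by
      rw [← map_natCast (PowerSeries.C (R := ℚ)) (N.choose k), PowerSeries.coeff_mul_C]
      ring
    have haux : (1 / (N.factorial : ℚ)) * (N.choose k : ℚ)
        = (1 / (k.factorial : ℚ)) * (1 / ((N - k).factorial : ℚ)) := by
      field_simp
      linear_combination hchoose
    rw [PowerSeries.coeff_exp, hc]
    simp only [Algebra.algebraMap_self, RingHom.id_apply]
    rw [← haux]
    ring
  rw [Finset.sum_congr rfl step1,
    sum_antidiag_range n
      (fun i j => (1 / (i.factorial : ℚ)) * (1 / (j.factorial : ℚ)) * cf n (a ^ i * b ^ j))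
      (fun i j h => by
        show (1 / (i.factorial : ℚ)) * (1 / (j.factorial : ℚ)) * cf n (a ^ i * b ^ j) = 0
        rw [coeff_mul_pow_eq_zero ha hb h, mul_zero])]
  refine Finset.sum_congr rfl fun i _ => Finset.sum_congr rfl fun j _ => ?_
  rw [PowerSeries.coeff_exp, PowerSeries.coeff_exp]
  simp [Algebra.algebraMap_self]

/-- If `comp f u` and `comp f v` are compared, their difference is divisible
by `u - v`. -/
lemma comp_sub_factor {u v : PowerSeries ℚ} (hu : cc u = 0) (hv : cc v = 0)
    (f : PowerSeries ℚ) :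
    ∃ R : PowerSeries ℚ, comp f u - comp f v = (u - v) * R := by
  classical
  set geom : ℕ → PowerSeries ℚ := fun i => ∑ j ∈ range i, u ^ j * v ^ (i - 1 - j) with hgeom
  set SP : ℕ → PowerSeries ℚ := fun M => ∑ i ∈ range M, cf i f • geom i with hSP
  refine ⟨PowerSeries.mk fun q => cf q (SP (q + 2)), ?_⟩
  ext n
  have hstable : ∀ q ≤ n, cf q (SP (q + 2)) = cf q (SP (n + 2)) := by
    intro q hq
    simp only [hSP]
    rw [map_sum, map_sum]
    refine Finset.sum_subset (Finset.range_subset_range.mpr (by omega)) ?_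
    intro i hi hni
    simp only [mem_range] at hi hni
    rw [map_smul]
    simp only [hgeom]
    rw [map_sum]
    have hz : ∀ j ∈ range i, cf q (u ^ j * v ^ (i - 1 - j)) = 0 := by
      intro j hj
      simp only [mem_range] at hj
      exact coeff_mul_pow_eq_zero hu hv (by omega)
    rw [Finset.sum_eq_zero hz, smul_zero]
  rw [map_sub, PowerSeries.coeff_mul]
  have : ∑ p ∈ Finset.HasAntidiagonal.antidiagonal n, cf p.1 (u - v) * cf p.2 (PowerSeries.mk fun q => cf q (SP (q + 2)))
      = ∑ p ∈ Finset.HasAntidiagonal.antidiagonal n, cf p.1 (u - v) * cf p.2 (SP (n + 2)) := by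
    refine Finset.sum_congr rfl fun p hp => ?_
    have hp' := Finset.HasAntidiagonal.mem_antidiagonal.mp hp
    rw [PowerSeries.coeff_mk, hstable p.2 (by omega)]
  rw [this, ← PowerSeries.coeff_mul]
  have hfactor : (u - v) * SP (n + 2) = ∑ i ∈ range (n + 2), cf i f • (u ^ i - v ^ i) := by
    rw [hSP, Finset.mul_sum]
    refine Finset.sum_congr rfl fun i _ => ?_
    rw [mul_smul_comm, hgeom]
    congr 1
    rw [mul_comm]
    exact geom_sum₂_mul u v i
  rw [hfactor, map_sum]
  rw [coeff_comp_of_le hu f (show n ≤ n + 1 by omega),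
    coeff_comp_of_le hv f (show n ≤ n + 1 by omega), ← Finset.sum_sub_distrib]
  refine Finset.sum_congr rfl fun i _ => ?_
  rw [PowerSeries.coeff_smul, map_sub, smul_eq_mul, mul_sub]

/-- Uniqueness for the fixed-point equation `A = c · exp(w·A)`. -/
lemma uniq {c w A B : PowerSeries ℚ} (hw : cc w = 0)
    (hA : A = c * comp (PowerSeries.exp ℚ) (w * A))
    (hB : B = c * comp (PowerSeries.exp ℚ) (w * B)) : A = B := by
  have hwA : cc (w * A) = 0 := by rw [map_mul, hw, zero_mul]
  have hwB : cc (w * B) = 0 := by rw [map_mul, hw, zero_mul]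
  obtain ⟨R, hR⟩ := comp_sub_factor hwA hwB (PowerSeries.exp ℚ)
  have key : A - B = w * ((A - B) * (c * R)) := by
    calc A - B = c * (comp (PowerSeries.exp ℚ) (w * A) - comp (PowerSeries.exp ℚ) (w * B)) := by
          rw [mul_sub, ← hA, ← hB]
      _ = c * ((w * A - w * B) * R) := by rw [hR]
      _ = w * ((A - B) * (c * R)) := by ring
  have hzero : ∀ n, cf n (A - B) = 0 := by
    intro n
    induction n using Nat.strong_induction_on with
    | _ n ih =>
      conv_lhs => rw [key]
      rw [PowerSeries.coeff_mul]
      refine Finset.sum_eq_zero fun p hp => ?_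
      have hp' := Finset.HasAntidiagonal.mem_antidiagonal.mp hp
      rcases Nat.eq_zero_or_pos p.1 with h1 | h1
      · rw [h1, PowerSeries.coeff_zero_eq_constantCoeff, hw, zero_mul]
      · rw [PowerSeries.coeff_mul]
        rw [Finset.sum_eq_zero, mul_zero]
        intro q hq
        have hq' := Finset.HasAntidiagonal.mem_antidiagonal.mp hq
        rw [ih q.1 (by omega), zero_mul]
  have h0 : A - B = 0 := by ext n; simpa using hzero n
  exact sub_eq_zero.mp h0

lemma comp_X_mul {g : PowerSeries ℚ} (hg : cc g = 0) (f : PowerSeries ℚ) :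
    comp (X * f) g = g * comp f g := by
  rw [comp_mul hg, comp_X_left hg]

lemma exp_comp_zero : comp (PowerSeries.exp ℚ) 0 = 1 := by
  rw [comp_zero, PowerSeries.constantCoeff_exp, map_one]

lemma exp_inv {a : PowerSeries ℚ} (ha : cc a = 0) :
    comp (PowerSeries.exp ℚ) a * comp (PowerSeries.exp ℚ) (-a) = 1 := by
  rw [← exp_comp_add ha (by rw [map_neg, ha, neg_zero]), add_neg_cancel, exp_comp_zero]

end MFAux

/-- Let `S(0) = 1` satisfy `S = e^{z(1+S)}`.  Then `z·S = (z·T) ∘ (z·e^z)`,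
where `T = e^{zT}` is the rooted labeled tree series, and `z·S` is
pseudo-involutory. -/
theorem marked_forests_pseudo_involutory (S T : PowerSeries ℚ)
    (hS0 : PowerSeries.constantCoeff (R := ℚ) S = 1)
    (hT0 : PowerSeries.constantCoeff (R := ℚ) T = 1)
    (hS : S = comp (PowerSeries.exp ℚ) (X * (1 + S)))
    (hT : T = comp (PowerSeries.exp ℚ) (X * T)) :
    X * S = comp (X * T) (X * PowerSeries.exp ℚ) ∧ PseudoInvolutory (X * S) := by
  open MFAux in
  classical
  have c0X : PowerSeries.constantCoeff (R := ℚ) (X : PowerSeries ℚ) = 0 := constantCoeff_X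
  have c0nX : PowerSeries.constantCoeff (R := ℚ) (-X : PowerSeries ℚ) = 0 := by
    rw [map_neg, c0X, neg_zero]
  have c0mul : ∀ f : PowerSeries ℚ, PowerSeries.constantCoeff (R := ℚ) (X * f) = 0 := fun f => by
    rw [map_mul, c0X, zero_mul]
  have c0neg : ∀ {f : PowerSeries ℚ}, PowerSeries.constantCoeff (R := ℚ) f = 0 →
      PowerSeries.constantCoeff (R := ℚ) (-f) = 0 := fun h => by rw [map_neg, h, neg_zero]
  set E : PowerSeries ℚ := PowerSeries.exp ℚ with hE
  set B : PowerSeries ℚ := X * E with hB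
  set Ab : PowerSeries ℚ := X * comp E (-X) with hAb
  set Tn : PowerSeries ℚ := comp T (-X) with hTn
  set Bb : PowerSeries ℚ := X * Tn with hBb
  have c0B : PowerSeries.constantCoeff (R := ℚ) B = 0 := c0mul _
  have c0Ab : PowerSeries.constantCoeff (R := ℚ) Ab = 0 := c0mul _
  have c0Bb : PowerSeries.constantCoeff (R := ℚ) Bb = 0 := c0mul _
  have c0A : PowerSeries.constantCoeff (R := ℚ) (X * T) = 0 := c0mul _
  have hEinv : E * comp E (-X) = 1 := by
    have h := exp_inv c0X
    rwa [comp_X_right] at h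
  have hEinv' : comp E (-X) * E = 1 := by rw [mul_comm]; exact hEinv
  -- Part 1 : X * S = comp (X * T) B
  have hS' : S = E * comp E (X * S) := by
    calc S = comp E (X * (1 + S)) := hS
      _ = comp E (X + X * S) := by rw [mul_add, mul_one]
      _ = comp E X * comp E (X * S) := exp_comp_add c0X (c0mul S)
      _ = E * comp E (X * S) := by rw [comp_X_right]
  have hUeq : comp T B = comp E (B * comp T B) := by
    conv_lhs => rw [hT]
    rw [comp_assoc (c0mul T) c0B, comp_X_mul c0B]
  have e2 : E * comp T B = E * comp E (X * (E * comp T B)) := by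
    have harg : X * (E * comp T B) = B * comp T B := by rw [hB]; ring
    rw [harg, ← hUeq]
  have hSU : S = E * comp T B := uniq c0X hS' e2
  have part1 : X * S = comp (X * T) B := by
    rw [hSU, comp_X_mul c0B, hB, mul_assoc]
  -- K1 : comp (X*T) Ab = X
  have h1 : Ab * E = X := by rw [hAb, mul_assoc, hEinv', mul_one]
  have hV : comp T Ab = 1 * comp E (Ab * comp T Ab) := by
    rw [one_mul]
    conv_lhs => rw [hT]
    rw [comp_assoc (c0mul T) c0Ab, comp_X_mul c0Ab]
  have hVc : E = 1 * comp E (Ab * E) := by rw [one_mul, h1, comp_X_right]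
  have hVE : comp T Ab = E := uniq c0Ab hV hVc
  have K1 : comp (X * T) Ab = X := by rw [comp_X_mul c0Ab, hVE, h1]
  -- K2 : comp Ab (X*T) = X
  have h2 : T * comp E (-(X * T)) = 1 := by
    nth_rewrite 1 [hT]
    exact exp_inv (c0mul T)
  have K2 : comp Ab (X * T) = X := by
    rw [hAb, comp_X_mul c0A, comp_assoc c0nX c0A, comp_neg, comp_X_left c0A,
      mul_assoc, h2, mul_one]
  -- K3 : comp B Bb = X
  have hTn1 : Tn = comp E (-(X * Tn)) := by
    conv_lhs => rw [hTn, hT]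
    rw [comp_assoc (c0mul T) c0nX, comp_X_mul c0nX, ← hTn, neg_mul]
  have h3 : Tn * comp E (X * Tn) = 1 := by
    nth_rewrite 1 [hTn1]
    rw [mul_comm]
    exact exp_inv (c0mul Tn)
  have K3 : comp B Bb = X := by
    rw [hB, comp_X_mul c0Bb, hBb, mul_assoc, h3, mul_one]
  -- K4 : comp Bb B = X
  have c0nB : PowerSeries.constantCoeff (R := ℚ) (-B) = 0 := c0neg c0B
  have hW : comp T (-B) = 1 * comp E (-B * comp T (-B)) := by
    rw [one_mul]
    conv_lhs => rw [hT]
    rw [comp_assoc (c0mul T) c0nB, comp_X_mul c0nB]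
  have h4 : -B * comp E (-X) = -X := by rw [hB, neg_mul, mul_assoc, hEinv, mul_one]
  have hWc : comp E (-X) = 1 * comp E (-B * comp E (-X)) := by rw [one_mul, h4]
  have hWE : comp T (-B) = comp E (-X) := uniq c0nB hW hWc
  have K4 : comp Bb B = X := by
    rw [hBb, comp_X_mul c0B, hTn, comp_assoc c0nX c0B, comp_neg, comp_X_left c0B,
      hWE, hB, mul_assoc, hEinv, mul_one]
  -- Pseudo-involutory
  have c0nAb : PowerSeries.constantCoeff (R := ℚ) (-Ab) = 0 := c0neg c0Ab
  have hfbar : -(comp (X * S) (-X)) = comp Bb Ab := by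
    have hBneg : comp B (-X) = -Ab := by
      rw [hB, comp_X_mul c0nX, hAb, neg_mul]
    have hBb_Ab : comp Bb Ab = Ab * comp T (-Ab) := by
      rw [hBb, comp_X_mul c0Ab, hTn, comp_assoc c0nX c0Ab, comp_neg, comp_X_left c0Ab]
    rw [part1, comp_assoc c0B c0nX, hBneg, hBb_Ab, comp_X_mul c0nAb, neg_mul, neg_neg]
  have c0BbAb : PowerSeries.constantCoeff (R := ℚ) (comp Bb Ab) = 0 := by
    rw [constantCoeff_comp c0Ab]; exact c0Bb
  have c0ATB : PowerSeries.constantCoeff (R := ℚ) (comp (X * T) B) = 0 := by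
    rw [constantCoeff_comp c0B]; exact c0A
  have g1 : comp (X * S) (-(comp (X * S) (-X))) = X := by
    rw [hfbar, part1, comp_assoc c0B c0BbAb, ← comp_assoc c0Bb c0Ab, K3,
      comp_X_left c0Ab, K1]
  have g2 : comp (-(comp (X * S) (-X))) (X * S) = X := by
    rw [hfbar, part1, comp_assoc c0Ab c0ATB, ← comp_assoc c0A c0B, K2,
      comp_X_left c0B, K4]
  exact ⟨part1, g1, g2⟩
end
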